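/- (Boas) Let s = (s_i)_{i∈ℕ₀} be an arbitrary real sequence. Then there exists a signed measure ν on [0,∞) such that s_i = ∫_0^∞ x^i dν(x) for all i ∈ ℕ₀; that is, every real sequence is a Stieltjes moment sequence of a signed measure. Equivalently, s can be written as the difference v - w of two Stieltjes moment sequences v, w of nonnegative measures supported in [0,∞). -/

import Mathlib

open MeasureTheory Finset
open scoped ENNReal

namespace Boas

lemma exists_w (i : ℕ) : ∃ w : Fin (i + 1) → ℝ,
    ∀ j : Fin (i + 1), ∑ k : Fin (i + 1), w k * ((k : ℝ) + 1) ^ (j : ℕ)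
      = if (j : ℕ) = i then 1 else 0 := by
  set v : Fin (i + 1) → ℝ := fun k => (k : ℝ) + 1 with hv
  set A : Matrix (Fin (i + 1)) (Fin (i + 1)) ℝ := (Matrix.vandermonde v).transpose with hA
  have hdet : A.det ≠ 0 := by
    rw [hA, Matrix.det_transpose, Matrix.det_vandermonde]
    refine ne_of_gt (Finset.prod_pos fun a _ => Finset.prod_pos fun b hb => ?_)
    have hab : a < b := Finset.mem_Ioi.1 hb
    have h2 : (a : ℝ) < b := by exact_mod_cast hab
    simp only [hv]
    linarith
  have hsurj : Function.Surjective A.mulVec :=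
    Matrix.mulVec_surjective_iff_isUnit.2
      ((Matrix.isUnit_iff_isUnit_det A).2 (isUnit_iff_ne_zero.2 hdet))
  obtain ⟨w, hw⟩ := hsurj (fun j => if (j : ℕ) = i then 1 else 0)
  refine ⟨w, fun j => ?_⟩
  have h := congrFun hw j
  rw [Matrix.mulVec, dotProduct] at h
  simpa [hA, Matrix.transpose_apply, Matrix.vandermonde, hv, mul_comm] using h

noncomputable def W (i : ℕ) : Fin (i + 1) → ℝ := (exists_w i).choose

lemma W_spec (i : ℕ) (j : Fin (i + 1)) :
    ∑ k : Fin (i + 1), W i k * ((k : ℝ) + 1) ^ (j : ℕ) = if (j : ℕ) = i then 1 else 0 :=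
  (exists_w i).choose_spec j

noncomputable def Mom (i j : ℕ) : ℝ := ∑ k : Fin (i + 1), W i k * ((k : ℝ) + 1) ^ j

lemma Mom_le (i j : ℕ) (h : j ≤ i) : Mom i j = if j = i then 1 else 0 := by
  have := W_spec i ⟨j, Nat.lt_succ_of_le h⟩
  simpa [Mom] using this

lemma Mom_eq_zero {i j : ℕ} (h : j < i) : Mom i j = 0 := by
  rw [Mom_le i j h.le, if_neg h.ne]

lemma Mom_eq_one (i : ℕ) : Mom i i = 1 := by
  rw [Mom_le i i le_rfl, if_pos rfl]

noncomputable def Aa (i : ℕ) : ℝ := ∑ k : Fin (i + 1), |W i k| * ((k : ℝ) + 1) ^ i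

lemma Aa_nonneg (i : ℕ) : 0 ≤ Aa i :=
  Finset.sum_nonneg fun k _ => mul_nonneg (abs_nonneg _) (by positivity)

noncomputable def tf (i : ℕ) (v : ℝ) : ℝ := max 1 (2 ^ i * (1 + |v|) * (1 + Aa i))

lemma one_le_tf (i : ℕ) (v : ℝ) : 1 ≤ tf i v := le_max_left _ _

lemma tf_pos (i : ℕ) (v : ℝ) : 0 < tf i v := lt_of_lt_of_le one_pos (one_le_tf i v)

noncomputable def c (s : ℕ → ℝ) : ℕ → ℝ
  | i => s i - ∑ r ∈ (Finset.range i).attach,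
      c s r * tf r (c s r) ^ (i - (r : ℕ)) * Mom r i
  termination_by i => i
  decreasing_by exact Finset.mem_range.mp r.2

noncomputable def t (s : ℕ → ℝ) (i : ℕ) : ℝ := tf i (c s i)

lemma one_le_t (s : ℕ → ℝ) (i : ℕ) : 1 ≤ t s i := one_le_tf _ _
lemma t_pos (s : ℕ → ℝ) (i : ℕ) : 0 < t s i := tf_pos _ _

lemma c_eq (s : ℕ → ℝ) (i : ℕ) :
    c s i = s i - ∑ r ∈ Finset.range i, c s r * t s r ^ (i - r) * Mom r i := by
  simp only [t]
  conv_lhs => rw [c]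
  rw [Finset.sum_attach (Finset.range i) (fun r => c s r * tf r (c s r) ^ (i - r) * Mom r i)]


noncomputable def pt (s : ℕ → ℝ) (n : ℕ × ℕ) : ℝ := t s n.1 * ((n.2 : ℝ) + 1)

noncomputable def atm (s : ℕ → ℝ) (n : ℕ × ℕ) : ℝ :=
  if h : n.2 < n.1 + 1 then c s n.1 / t s n.1 ^ n.1 * W n.1 ⟨n.2, h⟩ else 0

lemma pt_nonneg (s : ℕ → ℝ) (n : ℕ × ℕ) : 0 ≤ pt s n :=
  mul_nonneg (t_pos s n.1).le (by positivity)

lemma atm_eq_zero (s : ℕ → ℝ) {n : ℕ × ℕ} (h : ¬ n.2 < n.1 + 1) : atm s n = 0 := by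
  simp [atm, h]

lemma inner_summable (s : ℕ → ℝ) (f : ℕ × ℕ → ℝ) (hf : ∀ n, atm s n = 0 → f n = 0)
    (i : ℕ) : Summable fun k : ℕ => f (i, k) := by
  refine summable_of_ne_finset_zero (s := Finset.range (i + 1)) fun k hk => ?_
  exact hf _ (atm_eq_zero s (by simpa using hk))

lemma inner_sum (s : ℕ → ℝ) (i j : ℕ) :
    ∑' k : ℕ, atm s (i, k) * pt s (i, k) ^ j
      = c s i / t s i ^ i * t s i ^ j * Mom i j := by
  rw [tsum_eq_sum (s := Finset.range (i + 1))
    (fun k hk => by simp [atm_eq_zero s (n := (i, k)) (by simpa using hk)])]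
  rw [← Fin.sum_univ_eq_sum_range (fun k => atm s (i, k) * pt s (i, k) ^ j), Mom,
    Finset.mul_sum]
  refine Finset.sum_congr rfl fun k _ => ?_
  simp only [atm, pt, dif_pos k.isLt, Fin.eta]
  rw [mul_pow]
  ring

lemma inner_sum_abs (s : ℕ → ℝ) (i j : ℕ) :
    ∑' k : ℕ, |atm s (i, k)| * pt s (i, k) ^ j
      = |c s i| / t s i ^ i * t s i ^ j *
          ∑ k : Fin (i + 1), |W i k| * ((k : ℝ) + 1) ^ j := by
  rw [tsum_eq_sum (s := Finset.range (i + 1))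
    (fun k hk => by simp [atm_eq_zero s (n := (i, k)) (by simpa using hk)])]
  rw [← Fin.sum_univ_eq_sum_range (fun k => |atm s (i, k)| * pt s (i, k) ^ j),
    Finset.mul_sum]
  refine Finset.sum_congr rfl fun k _ => ?_
  have ht : |t s i| = t s i := abs_of_pos (t_pos s i)
  have htp : |t s i ^ i| = t s i ^ i := abs_of_pos (pow_pos (t_pos s i) i)
  simp only [atm, pt, dif_pos k.isLt, Fin.eta, abs_mul, abs_div, htp]
  rw [mul_pow]
  ring

lemma stage_bound (s : ℕ → ℝ) {i j : ℕ} (h : j < i) :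
    |c s i| / t s i ^ i * t s i ^ j *
        (∑ k : Fin (i + 1), |W i k| * ((k : ℝ) + 1) ^ j) ≤ (1 / 2) ^ i := by
  set T := t s i with hT
  set C := |c s i| with hC
  set A := Aa i with hA2
  have hT1 : (1 : ℝ) ≤ T := one_le_t s i
  have hT0 : (0 : ℝ) < T := t_pos s i
  have hC0 : 0 ≤ C := abs_nonneg _
  have hA0 : 0 ≤ A := Aa_nonneg i
  have hSA : (∑ k : Fin (i + 1), |W i k| * ((k : ℝ) + 1) ^ j) ≤ A := by
    refine Finset.sum_le_sum fun k _ => ?_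
    have : ((k : ℝ) + 1) ^ j ≤ ((k : ℝ) + 1) ^ i :=
      pow_le_pow_right₀ (le_add_of_nonneg_left (Nat.cast_nonneg _)) h.le
    exact mul_le_mul_of_nonneg_left this (abs_nonneg _)
  have hS0 : 0 ≤ ∑ k : Fin (i + 1), |W i k| * ((k : ℝ) + 1) ^ j :=
    Finset.sum_nonneg fun k _ => mul_nonneg (abs_nonneg _) (by positivity)
  have hTle : T ^ (j + 1) ≤ T ^ i := pow_le_pow_right₀ hT1 h
  have hTge : 2 ^ i * (1 + C) * (1 + A) ≤ T := le_max_right _ _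
  have step1 : C / T ^ i * T ^ j * (∑ k : Fin (i + 1), |W i k| * ((k : ℝ) + 1) ^ j)
      ≤ C / T ^ i * T ^ j * A := by
    have : (0:ℝ) ≤ C / T ^ i * T ^ j := by positivity
    exact mul_le_mul_of_nonneg_left hSA this
  have step2 : C / T ^ i * T ^ j * A ≤ C * A / T := by
    rw [div_mul_eq_mul_div, div_mul_eq_mul_div, div_le_div_iff₀ (by positivity) hT0]
    calc C * T ^ j * A * T = C * A * T ^ (j + 1) := by ring
      _ ≤ C * A * T ^ i := by
          exact mul_le_mul_of_nonneg_left hTle (by positivity)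
      _ = C * A * T ^ i := rfl
  have step3 : C * A / T ≤ (1 / 2) ^ i := by
    rw [div_le_iff₀ hT0]
    have hpow : ((1:ℝ) / 2) ^ i * 2 ^ i = 1 := by
      rw [← mul_pow]; norm_num
    calc C * A ≤ (1 + C) * (1 + A) := by nlinarith
      _ = (1 / 2) ^ i * (2 ^ i * (1 + C) * (1 + A)) := by
          rw [show ((1:ℝ)/2) ^ i * (2 ^ i * (1 + C) * (1 + A))
            = ((1:ℝ)/2) ^ i * 2 ^ i * ((1 + C) * (1 + A)) by ring, hpow, one_mul]
      _ ≤ (1 / 2) ^ i * T := by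
          exact mul_le_mul_of_nonneg_left hTge (by positivity)
  exact (step1.trans step2).trans step3


noncomputable def G (s : ℕ → ℝ) (j : ℕ) (n : ℕ × ℕ) : ℝ := |atm s n| * pt s n ^ j

lemma G_nonneg (s : ℕ → ℝ) (j : ℕ) : 0 ≤ G s j := fun n =>
  mul_nonneg (abs_nonneg _) (pow_nonneg (pt_nonneg s n) j)

lemma summable_G (s : ℕ → ℝ) (j : ℕ) : Summable (G s j) := by
  rw [summable_prod_of_nonneg (G_nonneg s j)]
  constructor
  · intro i
    exact inner_summable s _ (fun n hn => by simp [G, hn]) i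
  · have hval : ∀ i, (∑' k, G s j (i, k)) = |c s i| / t s i ^ i * t s i ^ j *
        ∑ k : Fin (i + 1), |W i k| * ((k : ℝ) + 1) ^ j := fun i => inner_sum_abs s i j
    set g : ℕ → ℝ := fun i => if i < j + 1 then (∑' k, G s j (i, k)) else (1 / 2) ^ i with hg
    have hgsum : Summable g := by
      rw [← summable_nat_add_iff (j + 1)]
      have : ∀ n : ℕ, g (n + (j + 1)) = (1 / 2 : ℝ) ^ (n + (j + 1)) := by
        intro n
        rw [hg]
        simp only []
        rw [if_neg (by omega)]
      refine Summable.congr ?_ (fun n => (this n).symm)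
      simpa [pow_add] using (summable_geometric_two.mul_right ((1 / 2 : ℝ) ^ (j + 1)))
    refine Summable.of_nonneg_of_le (fun i => tsum_nonneg fun k => G_nonneg s j _) ?_ hgsum
    intro i
    simp only [hg]
    split_ifs with hij
    · exact le_refl _
    · rw [hval i]
      exact stage_bound s (by omega)

lemma summable_F (s : ℕ → ℝ) (j : ℕ) :
    Summable (fun n : ℕ × ℕ => atm s n * pt s n ^ j) := by
  refine Summable.of_abs ?_
  refine (summable_G s j).congr fun n => ?_
  rw [G, abs_mul, abs_of_nonneg (pow_nonneg (pt_nonneg s n) j)]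

lemma tsum_F (s : ℕ → ℝ) (j : ℕ) :
    ∑' n : ℕ × ℕ, atm s n * pt s n ^ j = s j := by
  rw [Summable.tsum_prod' (summable_F s j)
    (fun i => inner_summable s (fun n => atm s n * pt s n ^ j)
      (fun n hn => by rw [hn, zero_mul]) i)]
  have hval : ∀ i, (∑' k, atm s (i, k) * pt s (i, k) ^ j)
      = c s i / t s i ^ i * t s i ^ j * Mom i j := fun i => inner_sum s i j
  rw [tsum_congr hval]
  have h0 : ∀ i ∉ Finset.range (j + 1), c s i / t s i ^ i * t s i ^ j * Mom i j = 0 := by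
    intro i hi
    have hji : j < i := by
      have : ¬ i < j + 1 := by simpa [Finset.mem_range] using hi
      omega
    rw [Mom_eq_zero hji, mul_zero]
  rw [tsum_eq_sum (s := Finset.range (j + 1)) h0]
  rw [Finset.sum_range_succ]
  have hlast : c s j / t s j ^ j * t s j ^ j * Mom j j = c s j := by
    rw [Mom_eq_one, mul_one, div_mul_cancel₀ _ (pow_ne_zero j (t_pos s j).ne')]
  have hterm : ∀ i ∈ Finset.range j,
      c s i / t s i ^ i * t s i ^ j * Mom i j = c s i * t s i ^ (j - i) * Mom i j := by
    intro i hi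
    rw [pow_sub₀ (t s i) (t_pos s i).ne' (Finset.mem_range.1 hi).le]
    ring
  rw [Finset.sum_congr rfl hterm, hlast]
  have := c_eq s j
  linarith


noncomputable def mu (s : ℕ → ℝ) (a : ℕ × ℕ → ℝ) : Measure ℝ :=
  Measure.sum fun n : ℕ × ℕ => ENNReal.ofReal (a n) • Measure.dirac (pt s n)

lemma mu_Iio (s : ℕ → ℝ) (a : ℕ × ℕ → ℝ) : mu s a (Set.Iio 0) = 0 := by
  rw [mu, Measure.sum_apply _ measurableSet_Iio]
  have h : ∀ n : ℕ × ℕ,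
      (ENNReal.ofReal (a n) • Measure.dirac (pt s n)) (Set.Iio (0:ℝ)) = 0 := by
    intro n
    rw [Measure.smul_apply, Measure.dirac_apply' _ measurableSet_Iio,
      Set.indicator_of_notMem (by simpa using pt_nonneg s n), smul_zero]
  simp [h]

lemma integrable_mu (s : ℕ → ℝ) (a : ℕ × ℕ → ℝ) (ha : ∀ n, |a n| ≤ |atm s n|) (i : ℕ) :
    Integrable (fun x : ℝ => x ^ i) (mu s a) := by
  constructor
  · exact (continuous_pow i).aestronglyMeasurable
  · show (∫⁻ x, ‖x ^ i‖₊ ∂(mu s a)) < ⊤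
    rw [mu, lintegral_sum_measure]
    simp only [lintegral_smul_measure, lintegral_dirac]
    have hle : ∀ n : ℕ × ℕ, ENNReal.ofReal (a n) * (‖pt s n ^ i‖₊ : ℝ≥0∞)
        ≤ ENNReal.ofReal (G s i n) := by
      intro n
      rw [← enorm_eq_nnnorm, Real.enorm_eq_ofReal_abs, abs_of_nonneg (pow_nonneg (pt_nonneg s n) i), G,
        ENNReal.ofReal_mul (abs_nonneg _)]
      exact mul_le_mul_left (ENNReal.ofReal_le_ofReal ((le_abs_self _).trans (ha n))) _
    calc (∑' n : ℕ × ℕ, ENNReal.ofReal (a n) * (‖pt s n ^ i‖₊ : ℝ≥0∞))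
        ≤ ∑' n : ℕ × ℕ, ENNReal.ofReal (G s i n) := ENNReal.tsum_le_tsum hle
      _ = ENNReal.ofReal (∑' n : ℕ × ℕ, G s i n) :=
          (ENNReal.ofReal_tsum_of_nonneg (fun n => G_nonneg s i n) (summable_G s i)).symm
      _ < ⊤ := ENNReal.ofReal_lt_top

lemma integral_mu (s : ℕ → ℝ) (a : ℕ × ℕ → ℝ) (ha : ∀ n, |a n| ≤ |atm s n|) (i : ℕ) :
    ∫ x, x ^ i ∂(mu s a) = ∑' n : ℕ × ℕ, max (a n) 0 * pt s n ^ i := by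
  rw [mu, integral_sum_measure (by rw [← mu]; exact integrable_mu s a ha i)]
  refine tsum_congr fun n => ?_
  rw [integral_smul_measure, integral_dirac, smul_eq_mul, ENNReal.toReal_ofReal']

lemma summable_pos_part (s : ℕ → ℝ) (a : ℕ × ℕ → ℝ) (ha : ∀ n, |a n| ≤ |atm s n|) (i : ℕ) :
    Summable fun n : ℕ × ℕ => max (a n) 0 * pt s n ^ i := by
  refine Summable.of_nonneg_of_le
    (fun n => mul_nonneg (le_max_right _ _) (pow_nonneg (pt_nonneg s n) i))
    (fun n => ?_) (summable_G s i)
  refine mul_le_mul_of_nonneg_right ?_ (pow_nonneg (pt_nonneg s n) i)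
  exact (max_le (le_abs_self _) (abs_nonneg _)).trans (ha n)

end Boas

/-- Boas' theorem: every real sequence is the moment sequence of a signed measure on
`[0,∞)`, i.e. the difference of two Stieltjes moment sequences. -/
theorem stmt19 (s : ℕ → ℝ) :
    ∃ μp μm : Measure ℝ,
      μp (Set.Iio 0) = 0 ∧ μm (Set.Iio 0) = 0 ∧
      (∀ i : ℕ, Integrable (fun x : ℝ => x ^ i) μp) ∧
      (∀ i : ℕ, Integrable (fun x : ℝ => x ^ i) μm) ∧
      ∀ i : ℕ, s i = (∫ x, x ^ i ∂μp) - ∫ x, x ^ i ∂μm := by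
  classical
  have hap : ∀ n, |Boas.atm s n| ≤ |Boas.atm s n| := fun n => le_refl _
  have ham : ∀ n, |(-(Boas.atm s n))| ≤ |Boas.atm s n| := fun n => (abs_neg _).le
  refine ⟨Boas.mu s (fun n => Boas.atm s n), Boas.mu s (fun n => -(Boas.atm s n)),
    Boas.mu_Iio s _, Boas.mu_Iio s _,
    fun i => Boas.integrable_mu s _ hap i, fun i => Boas.integrable_mu s _ ham i,
    fun i => ?_⟩
  rw [Boas.integral_mu s _ hap i, Boas.integral_mu s _ ham i]
  rw [← Summable.tsum_sub (Boas.summable_pos_part s _ hap i) (Boas.summable_pos_part s _ ham i)]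
  rw [← Boas.tsum_F s i]
  refine tsum_congr fun n => ?_
  rw [← sub_mul, max_zero_sub_max_neg_zero_eq_self]
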